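/- Let Λ({0}) > 0 and θ > 0. If (E_j)_{j≥0} are independent exponential random variables where E_j has rate Λ({0}) * C(j+1, 2) + (j+1) * θ, then E[∑_{j=0}^∞ E_j] = ∑_{j=0}^∞ 1 / ((j+1) * (θ + Λ({0}) * j / 2)), and this equals (ψ(2θ/Λ({0})) + γ) / (θ − Λ({0})/2) when θ ≠ Λ({0})/2. -/

import Mathlib

open MeasureTheory ProbabilityTheory

/-- The digamma function, the logarithmic derivative of the Gamma function. -/
noncomputable def digamma (x : ℝ) : ℝ := deriv (fun y => Real.log (Real.Gamma y)) x

section Aux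
open Set Real Filter Topology


lemma exp_mean {r : ℝ} (hr : 0 < r) :
    ∫⁻ x, ENNReal.ofReal x ∂(expMeasure r) = ENNReal.ofReal (1 / r) := by
  have hint : IntegrableOn (fun x : ℝ => r * Real.exp (-(r * x)) * x) (Ioi 0) := by
    have h := integrableOn_rpow_mul_exp_neg_mul_rpow (s := 1) (p := 1) (b := r)
      (by norm_num) one_pos hr
    simp only [Real.rpow_one] at h
    exact (h.const_mul r).congr (ae_of_all _ (fun x => by ring))
  have hval : ∫ x in Ioi 0, r * Real.exp (-(r * x)) * x = 1 / r := by
    simp_rw [mul_assoc]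
    rw [MeasureTheory.integral_const_mul]
    have h2 := Real.integral_rpow_mul_exp_neg_mul_Ioi (a := 2) (by norm_num) hr
    have : ∫ x in Ioi 0, Real.exp (-(r * x)) * x
        = ∫ t in Ioi 0, t ^ ((2:ℝ) - 1) * Real.exp (-(r * t)) := by
      refine setIntegral_congr_fun measurableSet_Ioi (fun x hx => ?_)
      norm_num [mul_comm]
    rw [this, h2, Real.Gamma_two]
    rw [show ((1:ℝ)/r) ^ (2:ℝ) = (1/r)^(2:ℕ) from by rw [← Real.rpow_natCast]; norm_num]
    field_simp
  rw [expMeasure, gammaMeasure,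
    lintegral_withDensity_eq_lintegral_mul _ (show Measurable (gammaPDF 1 r) from (measurable_gammaPDFReal 1 r).ennreal_ofReal)
      ENNReal.measurable_ofReal]
  have hsplit : ∀ x : ℝ, (gammaPDF 1 r * fun x => ENNReal.ofReal x) x
      = (Ioi (0:ℝ)).indicator (fun x => ENNReal.ofReal (r * Real.exp (-(r*x)) * x)) x := by
    intro x
    simp only [Pi.mul_apply, indicator]
    rcases lt_trichotomy x 0 with h | rfl | h
    · rw [gammaPDF_of_neg h, if_neg (by simpa using h.not_gt), zero_mul]
    · simp
    · rw [if_pos (mem_Ioi.mpr h),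
        show gammaPDF 1 r x = exponentialPDF r x from rfl, exponentialPDF_of_nonneg h.le,
        ← ENNReal.ofReal_mul (by positivity)]
  rw [lintegral_congr hsplit, lintegral_indicator measurableSet_Ioi,
    ← ofReal_integral_eq_lintegral_ofReal hint
      ((ae_restrict_iff' measurableSet_Ioi).mpr (ae_of_all _ fun x hx => mul_nonneg (by positivity) (le_of_lt hx))), hval]


lemma summable_aux {x : ℝ} (hx : 0 < x) :
    Summable (fun n : ℕ => 1 / (((n:ℝ) + 1) * ((n:ℝ) + x))) := by
  have hmin : 0 < min 1 x := lt_min one_pos hx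
  have hbase : Summable (fun n : ℕ => 1 / ((n:ℝ) + 1) ^ 2) := by
    have h := (summable_nat_add_iff 1).mpr (Real.summable_one_div_nat_pow.mpr (le_refl 2))
    simpa [add_comm] using h
  refine Summable.of_nonneg_of_le (fun n => by positivity) (fun n => ?_)
    (hbase.mul_left (1 / min 1 x))
  have key : min 1 x * ((n:ℝ) + 1) ^ 2 ≤ ((n:ℝ) + 1) * ((n:ℝ) + x) := by
    have h1 := min_le_left 1 x
    have h2 := min_le_right 1 x
    have hstep : min 1 x * ((n:ℝ) + 1) ≤ (n:ℝ) + x := by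
      nlinarith [Nat.cast_nonneg (α := ℝ) n]
    have := mul_le_mul_of_nonneg_left hstep (by positivity : (0:ℝ) ≤ (n:ℝ) + 1)
    nlinarith [this]
  calc 1 / (((n:ℝ) + 1) * ((n:ℝ) + x)) ≤ 1 / (min 1 x * ((n:ℝ) + 1) ^ 2) :=
        one_div_le_one_div_of_le (by positivity) key
    _ = 1 / min 1 x * (1 / ((n:ℝ) + 1) ^ 2) := (one_div_mul_one_div _ _).symm

lemma tendsto_log_sub (x : ℝ) :
    Tendsto (fun n : ℕ => Real.log (x + n) - Real.log n) atTop (𝓝 0) := by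
  have h1 : Tendsto (fun n : ℕ => 1 + x / n) atTop (𝓝 1) := by
    simpa using tendsto_const_nhds.add (tendsto_const_div_atTop_nhds_zero_nat x)
  have h2 : Tendsto (fun n : ℕ => Real.log (1 + x / n)) atTop (𝓝 0) := by
    have := ((Real.continuousAt_log one_ne_zero).tendsto.comp h1)
    simpa [Function.comp_def] using this
  refine h2.congr' ?_
  filter_upwards [eventually_gt_atTop (⌈|x|⌉₊)] with n hn
  have hn0 : (0:ℝ) < n := by
    have : 0 < n := lt_of_le_of_lt (Nat.zero_le _) hn
    exact_mod_cast this
  have hxn : 0 < x + n := by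
    have : |x| < n := by
      calc |x| ≤ ⌈|x|⌉₊ := Nat.le_ceil _
      _ < n := by exact_mod_cast hn
    have := neg_abs_le x
    linarith
  rw [show 1 + x / n = (x + n) / n by field_simp; ring, Real.log_div hxn.ne' hn0.ne']

lemma hasSum_digamma {x : ℝ} (hx : 0 < x) :
    HasSum (fun n : ℕ => 1 / ((n:ℝ) + 1) - 1 / ((n:ℝ) + x))
      (digamma x + Real.eulerMascheroniConstant) := by
  set f := fun y : ℝ => Real.log (Real.Gamma y) with hf
  have hc : ConvexOn ℝ (Ioi 0) f := Real.convexOn_log_Gamma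
  have h_rec : ∀ y : ℝ, 0 < y → f (y + 1) = f y + Real.log y := fun y hy => by
    simp only [hf]
    rw [Real.Gamma_add_one hy.ne', Real.log_mul hy.ne' (Real.Gamma_pos_of_pos hy).ne', add_comm]
  have hder : ∀ {y : ℝ}, 0 < y → DifferentiableAt ℝ f y := fun {y} hy =>
    (Real.differentiableAt_Gamma (fun m => by
      have := Nat.cast_nonneg (α := ℝ) m; intro h; rw [h] at hy; linarith)).log
      (Real.Gamma_ne_zero (fun m => by
        have := Nat.cast_nonneg (α := ℝ) m; intro h; rw [h] at hy; linarith))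
  have hder_rec : ∀ y : ℝ, 0 < y → deriv f (y + 1) = deriv f y + 1 / y := fun y hy => by
    rw [← deriv_comp_add_const, one_div, ← Real.deriv_log,
      ← deriv_add (hder (by positivity)) (Real.differentiableAt_log hy.ne')]
    apply Filter.EventuallyEq.deriv_eq
    filter_upwards [eventually_gt_nhds hy] using h_rec
  have hpos : ∀ n : ℕ, (0:ℝ) < x + n := fun n => by
    have := Nat.cast_nonneg (α := ℝ) n; linarith
  have hder_nat : ∀ n : ℕ, deriv f (x + n) = deriv f x + ∑ k ∈ Finset.range n, 1 / (x + k) := by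
    intro n
    induction n with
    | zero => simp
    | succ n ih =>
      have h := hder_rec (x + n) (hpos n)
      push_cast
      rw [show x + ((n:ℝ) + 1) = (x + n) + 1 by ring, h, ih, Finset.sum_range_succ]
      push_cast
      ring
  have hLB : ∀ n : ℕ, 1 ≤ n → Real.log (x + n - 1) ≤ deriv f (x + n) := by
    intro n hn
    have hn1 : (1:ℝ) ≤ n := by exact_mod_cast hn
    have h0 : (0:ℝ) < x + n - 1 := by linarith
    have h1 : (0:ℝ) < x + n := hpos n
    refine (le_of_eq ?_).trans <| hc.slope_le_deriv (mem_Ioi.mpr h0) (mem_Ioi.mpr h1)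
      (by linarith) (hder h1)
    have heq : f (x + n) = f (x + n - 1) + Real.log (x + n - 1) := by
      have := h_rec (x + n - 1) h0
      rw [sub_add_cancel] at this
      exact this
    rw [slope_def_field, show x + (n:ℝ) - (x + n - 1) = (1:ℝ) by ring, div_one, heq,
      add_sub_cancel_left]
  have hUB : ∀ n : ℕ, deriv f (x + n) ≤ Real.log (x + n) := by
    intro n
    have h1 : (0:ℝ) < x + n := hpos n
    refine (hc.deriv_le_slope (mem_Ioi.mpr h1) (mem_Ioi.mpr (by linarith : (0:ℝ) < x + n + 1))
      (by linarith) (hder h1)).trans (le_of_eq ?_)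
    rw [slope_def_field, show x + (n:ℝ) + 1 - (x + n) = (1:ℝ) by ring, div_one,
      h_rec (x + n) h1, add_sub_cancel_left]
  have hsq : Tendsto (fun n : ℕ => deriv f (x + n) - Real.log n) atTop (𝓝 0) := by
    refine tendsto_of_tendsto_of_tendsto_of_le_of_le' (tendsto_log_sub (x - 1))
      (tendsto_log_sub x) ?_ ?_
    · filter_upwards [eventually_ge_atTop 1] with n hn
      have h := hLB n hn
      have : Real.log (x - 1 + n) = Real.log (x + n - 1) := by ring_nf
      linarith
    · filter_upwards with n
      have h := hUB n
      linarith
  have hharm : Tendsto (fun n : ℕ => (harmonic n : ℝ) - Real.log n) atTop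
      (𝓝 Real.eulerMascheroniConstant) := Real.tendsto_harmonic_sub_log
  have hpartial : ∀ n : ℕ, ∑ k ∈ Finset.range n, (1 / ((k:ℝ) + 1) - 1 / ((k:ℝ) + x))
      = deriv f x + ((harmonic n : ℝ) - Real.log n) + (Real.log n - deriv f (x + n)) := by
    intro n
    rw [Finset.sum_sub_distrib]
    have h1 : ∑ k ∈ Finset.range n, 1 / ((k:ℝ) + 1) = (harmonic n : ℝ) := by
      rw [harmonic]
      push_cast
      exact Finset.sum_congr rfl (fun k _ => by rw [one_div])
    have h2 : ∑ k ∈ Finset.range n, 1 / ((k:ℝ) + x) = deriv f (x + n) - deriv f x := by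
      rw [hder_nat n]
      rw [show (∑ k ∈ Finset.range n, 1 / ((k:ℝ) + x))
        = ∑ k ∈ Finset.range n, 1 / (x + (k:ℝ)) from
        Finset.sum_congr rfl (fun k _ => by rw [add_comm])]
      ring
    rw [h1, h2]
    ring
  have htend : Tendsto (fun n : ℕ => ∑ k ∈ Finset.range n, (1 / ((k:ℝ) + 1) - 1 / ((k:ℝ) + x)))
      atTop (𝓝 (deriv f x + Real.eulerMascheroniConstant)) := by
    have hsq' : Tendsto (fun n : ℕ => Real.log n - deriv f (x + n)) atTop (𝓝 0) := by
      have h := hsq.neg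
      simp only [neg_sub, neg_zero] at h
      exact h
    have h := ((tendsto_const_nhds (x := deriv f x) (f := atTop)).add hharm).add hsq'
    simp only [add_zero] at h
    exact h.congr (fun n => (hpartial n).symm)
  have hsumm : Summable (fun n : ℕ => 1 / ((n:ℝ) + 1) - 1 / ((n:ℝ) + x)) := by
    refine ((summable_aux hx).mul_left (x - 1)).congr (fun n => ?_)
    have h2 : ((n:ℝ) + 1) ≠ 0 := by positivity
    have h3 : ((n:ℝ) + x) ≠ 0 := by
      have := (hpos n).ne'
      intro h
      apply this
      linarith
    field_simp
    ring
  have hs := hsumm.hasSum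
  have huniq := tendsto_nhds_unique hs.tendsto_sum_nat htend
  rw [show digamma x = deriv f x from rfl, ← huniq]
  exact hs

lemma tsum_inv_eq {x : ℝ} (hx : 0 < x) (hx1 : x ≠ 1) :
    ∑' n : ℕ, 1 / (((n:ℝ) + 1) * ((n:ℝ) + x))
      = (digamma x + Real.eulerMascheroniConstant) / (x - 1) := by
  have hsum := (hasSum_digamma hx).tsum_eq
  have hcong : ∀ n : ℕ, 1 / ((n:ℝ) + 1) - 1 / ((n:ℝ) + x)
      = (x - 1) * (1 / (((n:ℝ) + 1) * ((n:ℝ) + x))) := by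
    intro n
    have h2 : ((n:ℝ) + 1) ≠ 0 := by positivity
    have h3 : ((n:ℝ) + x) ≠ 0 := by positivity
    field_simp
    ring
  rw [tsum_congr hcong, tsum_mul_left] at hsum
  have hne : x - 1 ≠ 0 := sub_ne_zero.mpr hx1
  rw [eq_div_iff hne, mul_comm]
  exact hsum

end Aux

theorem mean_sum_of_exponentials
    {Ω : Type*} [MeasurableSpace Ω] (P : Measure Ω) [IsProbabilityMeasure P]
    (c θ : ℝ) (hc : 0 < c) (hθ : 0 < θ)
    (E : ℕ → Ω → ℝ) (hmeas : ∀ j, Measurable (E j))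
    (hindep : iIndepFun E P)
    (hdist : ∀ j : ℕ,
      P.map (E j) = expMeasure (c * ((j + 1).choose 2 : ℕ) + (j + 1 : ℝ) * θ)) :
    (∫ ω, ∑' j : ℕ, E j ω ∂P)
        = ∑' j : ℕ, 1 / ((j + 1 : ℝ) * (θ + c * (j : ℝ) / 2)) ∧
    (θ ≠ c / 2 →
      ∑' j : ℕ, 1 / ((j + 1 : ℝ) * (θ + c * (j : ℝ) / 2))
        = (digamma (2 * θ / c) + Real.eulerMascheroniConstant) / (θ - c / 2)) := by
  have hc' : c ≠ 0 := hc.ne'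
  set x : ℝ := 2 * θ / c with hxdef
  have hx : 0 < x := by positivity
  -- pointwise identity between the two summand forms
  have hcong : ∀ j : ℕ, 1 / (((j:ℝ) + 1) * (θ + c * (j:ℝ) / 2))
      = (2 / c) * (1 / (((j:ℝ) + 1) * ((j:ℝ) + x))) := by
    intro j
    have h1 : ((j:ℝ) + 1) ≠ 0 := by positivity
    have h2 : θ + c * (j:ℝ) / 2 ≠ 0 := by positivity
    have h3 : ((j:ℝ) + x) ≠ 0 := by positivity
    rw [hxdef]
    field_simp
    ring_nf
  have hms : Summable (fun j : ℕ => 1 / (((j:ℝ) + 1) * (θ + c * (j:ℝ) / 2))) := by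
    refine ((summable_aux hx).mul_left (2 / c)).congr (fun j => (hcong j).symm)
  have hmpos : ∀ j : ℕ, 0 ≤ 1 / (((j:ℝ) + 1) * (θ + c * (j:ℝ) / 2)) := fun j => by positivity
  constructor
  · -- the expectation computation
    set lam : ℕ → ℝ := fun j => c * (((j+1).choose 2 : ℕ) : ℝ) + ((j:ℝ) + 1) * θ with hlam
    have hlam_eq : ∀ j : ℕ, lam j = ((j:ℝ) + 1) * (θ + c * (j:ℝ) / 2) := by
      intro j
      have hch : (((j+1).choose 2 : ℕ) : ℝ) = ((j:ℝ) + 1) * (j:ℝ) / 2 := by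
        rw [Nat.cast_choose_two]
        push_cast
        ring
      simp only [hlam, hch]
      ring
    have hlam_pos : ∀ j : ℕ, 0 < lam j := by
      intro j
      rw [hlam_eq j]
      have h2 : (0:ℝ) ≤ (j:ℝ) := Nat.cast_nonneg _
      positivity
    have hmean : ∀ j : ℕ, ∫⁻ ω, ENNReal.ofReal (E j ω) ∂P = ENNReal.ofReal (1 / lam j) := by
      intro j
      have hmap : ∫⁻ y, ENNReal.ofReal y ∂(P.map (E j)) = ∫⁻ ω, ENNReal.ofReal (E j ω) ∂P :=
        lintegral_map ENNReal.measurable_ofReal (hmeas j)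
      rw [← hmap, hdist j]
      exact exp_mean (hlam_pos j)
    have hae : ∀ j : ℕ, ∀ᵐ ω ∂P, 0 ≤ E j ω := by
      intro j
      have hnull : P.map (E j) (Set.Iio 0) = 0 := by
        rw [hdist j, expMeasure, gammaMeasure, withDensity_apply _ measurableSet_Iio,
          setLIntegral_congr_fun measurableSet_Iio
            (fun y (hy : y < 0) => gammaPDF_of_neg hy), lintegral_zero]
      have hpre := Measure.map_apply (μ := P) (hmeas j) (measurableSet_Iio (a := (0:ℝ)))
      rw [hnull] at hpre
      rw [ae_iff]
      convert hpre.symm using 2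
      ext ω
      simp [Set.mem_Iio, not_le]
    have haeall : ∀ᵐ ω ∂P, ∀ j, 0 ≤ E j ω := ae_all_iff.mpr hae
    set G : Ω → ENNReal := fun ω => ∑' j, ENNReal.ofReal (E j ω) with hG
    have hGmeas : Measurable G := Measurable.ennreal_tsum (fun j => (hmeas j).ennreal_ofReal)
    have hlint : ∫⁻ ω, G ω ∂P
        = ENNReal.ofReal (∑' j : ℕ, 1 / (((j:ℝ) + 1) * (θ + c * (j:ℝ) / 2))) := by
      rw [hG]
      rw [lintegral_tsum (fun j => ((hmeas j).ennreal_ofReal).aemeasurable)]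
      have h1 : ∀ j : ℕ, ∫⁻ ω, ENNReal.ofReal (E j ω) ∂P
          = ENNReal.ofReal (1 / (((j:ℝ) + 1) * (θ + c * (j:ℝ) / 2))) := by
        intro j
        rw [hmean j, hlam_eq j]
      rw [tsum_congr h1, ← ENNReal.ofReal_tsum_of_nonneg hmpos hms]
    have hfin : ∫⁻ ω, G ω ∂P ≠ ⊤ := by rw [hlint]; exact ENNReal.ofReal_ne_top
    have hGlt : ∀ᵐ ω ∂P, G ω < ⊤ := ae_lt_top hGmeas hfin
    have hkey : ∀ᵐ ω ∂P, (∑' j : ℕ, E j ω) = (G ω).toReal := by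
      filter_upwards [haeall, hGlt] with ω h1 h2
      have htr : ∀ j : ℕ, (ENNReal.ofReal (E j ω)).toReal = E j ω :=
        fun j => ENNReal.toReal_ofReal (h1 j)
      rw [hG]
      rw [ENNReal.tsum_toReal_eq (fun j => ENNReal.ofReal_ne_top)]
      exact (tsum_congr htr).symm
    calc ∫ ω, ∑' j : ℕ, E j ω ∂P = ∫ ω, (G ω).toReal ∂P := integral_congr_ae hkey
      _ = (∫⁻ ω, G ω ∂P).toReal := integral_toReal hGmeas.aemeasurable hGlt
      _ = ∑' j : ℕ, 1 / (((j:ℝ) + 1) * (θ + c * (j:ℝ) / 2)) := by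
          rw [hlint, ENNReal.toReal_ofReal (tsum_nonneg hmpos)]
  · -- the digamma formula
    intro hne
    have hx1 : x ≠ 1 := by
      rw [hxdef]
      intro h
      apply hne
      field_simp at h
      linarith
    rw [tsum_congr hcong, tsum_mul_left, tsum_inv_eq hx hx1]
    have hden : θ - c / 2 ≠ 0 := sub_ne_zero.mpr hne
    have hden2 : x - 1 ≠ 0 := sub_ne_zero.mpr hx1
    have hkey : 2 / c / (x - 1) = 1 / (θ - c / 2) := by
      rw [div_eq_div_iff hden2 hden, hxdef]
      field_simp
    set D := digamma x + Real.eulerMascheroniConstant with hD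
    calc 2 / c * (D / (x - 1)) = D * (2 / c / (x - 1)) := by ring
      _ = D * (1 / (θ - c / 2)) := by rw [hkey]
      _ = D / (θ - c / 2) := by ring
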